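/- For p, r > 1 and d ≥ 1, the function h(x) = ‖x‖_{ℓ_r}^p belongs to the Hölder class C^{min(2, p, r)}(B(0,2)): h is differentiable on ℝ^d with ∂h/∂x_l = p x_l |x_l|^{r−2} ‖x‖_{ℓ_r}^{p−r}, and each partial derivative is Hölder continuous on B(0,2) with exponent min(1, p−1, r−1) and constant depending only on d, p, r. -/

import Mathlib

open Real Filter Asymptotics

section helpers
variable {a b c s q t u v M : ℝ}

lemma sgn_pow_of_nonneg (h : c + 1 ≠ 0) (hu : 0 ≤ u) : u * |u| ^ c = u ^ (c + 1) := by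
  rcases eq_or_lt_of_le hu with h0 | h0
  · rw [← h0, Real.zero_rpow h, abs_zero, zero_mul]
  · rw [abs_of_pos h0]
    rw [Real.rpow_add' hu h]  -- u ^ (c+1) = u^c * u^1
    rw [Real.rpow_one]; ring

lemma sgn_pow_of_nonpos (h : c + 1 ≠ 0) (hu : u ≤ 0) : u * |u| ^ c = -((-u) ^ (c + 1)) := by
  have h2 := sgn_pow_of_nonneg h (neg_nonneg.2 hu)
  rw [abs_neg] at h2
  linarith

lemma abs_sgn_pow (h : c + 1 ≠ 0) (u : ℝ) : |u * |u| ^ c| = |u| ^ (c + 1) := by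
  rw [abs_mul, abs_of_nonneg (Real.rpow_nonneg (abs_nonneg u) c)]
  rcases eq_or_ne u 0 with h0 | h0
  · rw [h0, abs_zero, zero_mul, Real.zero_rpow h]
  · rw [Real.rpow_add' (abs_nonneg u) h, Real.rpow_one]; ring

lemma rpow_mvt (q : ℝ) (ha : 0 < a) (hab : a ≤ b) :
    ∃ c, a ≤ c ∧ c ≤ b ∧ b ^ q - a ^ q = q * c ^ (q - 1) * (b - a) := by
  rcases eq_or_lt_of_le hab with h | h
  · exact ⟨a, le_refl a, hab, by rw [← h]; ring⟩
  · obtain ⟨c, hc, hc2⟩ := exists_hasDerivAt_eq_slope (fun x => x ^ q)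
      (fun x => q * x ^ (q - 1)) h
      (fun x hx => (Real.continuousAt_rpow_const x q
        (Or.inl (ne_of_gt (lt_of_lt_of_le ha hx.1)))).continuousWithinAt)
      (fun x hx => Real.hasDerivAt_rpow_const (Or.inl (ne_of_gt (lt_trans ha hx.1))))
    refine ⟨c, hc.1.le, hc.2.le, ?_⟩
    rw [hc2, div_mul_cancel₀ _ (ne_of_gt (by linarith : (0:ℝ) < b - a))]

lemma rpow_sub_le_sub_rpow (hs0 : 0 ≤ s) (hs1 : s ≤ 1) (ha : 0 ≤ a) (hab : a ≤ b) :
    b ^ s - a ^ s ≤ (b - a) ^ s := by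
  have key := NNReal.rpow_add_le_add_rpow a.toNNReal (b - a).toNNReal hs0 hs1
  have hb : 0 ≤ b := le_trans ha hab
  have ht : 0 ≤ b - a := by linarith
  have h1 : a.toNNReal + (b - a).toNNReal = b.toNNReal := by
    ext; simp [Real.coe_toNNReal _ ha, Real.coe_toNNReal _ ht, Real.coe_toNNReal _ hb]
  rw [h1] at key
  have key2 := NNReal.coe_le_coe.2 key
  push_cast [NNReal.coe_rpow, Real.coe_toNNReal _ ha, Real.coe_toNNReal _ ht,
    Real.coe_toNNReal _ hb] at key2
  linarith

/-- power-difference Hölder bound on `[0,M]`. -/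
lemma pow_diff_holder (hs : 0 < s) (hM : 1 ≤ M) (ha : 0 ≤ a) (hab : a ≤ b) (hbM : b ≤ M) :
    b ^ s - a ^ s ≤ (s + 2) * M ^ s * (b - a) ^ (min 1 s) := by
  have hb : 0 ≤ b := le_trans ha hab
  have ht : 0 ≤ b - a := by linarith
  have hMpos : (0:ℝ) < M := lt_of_lt_of_le one_pos hM
  have hMs : (0:ℝ) < M ^ s := Real.rpow_pos_of_pos hMpos s
  rcases le_or_gt s 1 with h1 | h1
  · rw [min_eq_right h1]
    calc b ^ s - a ^ s ≤ (b - a) ^ s := rpow_sub_le_sub_rpow hs.le h1 ha hab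
    _ = 1 * 1 * (b - a) ^ s := by ring
    _ ≤ (s + 2) * M ^ s * (b - a) ^ s := by
        apply mul_le_mul_of_nonneg_right _ (Real.rpow_nonneg ht s)
        apply mul_le_mul (by linarith) (Real.one_le_rpow hM hs.le) one_pos.le (by linarith)
  · rw [min_eq_left h1.le]
    rcases le_or_gt a (b - a) with hcase | hcase
    · -- a ≤ t : b ≤ 2t
      have hb2 : b ≤ 2 * (b - a) := by linarith
      have hsplit : b ^ s = b ^ (s - 1) * b := by
        rw [show s = (s - 1) + 1 by ring,
          Real.rpow_add' hb (fun hX => (ne_of_gt hs) (by linarith)), Real.rpow_one]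
        ring_nf
      have h3 : M ^ (s - 1) ≤ M ^ s :=
        Real.rpow_le_rpow_of_exponent_le hM (by linarith)
      have h4 : b ^ (s - 1) ≤ M ^ (s - 1) := Real.rpow_le_rpow hb hbM (by linarith)
      have h5 : (0:ℝ) ≤ b ^ (s - 1) := Real.rpow_nonneg hb _
      calc b ^ s - a ^ s ≤ b ^ s := by
            have := Real.rpow_nonneg ha s; linarith
      _ = b ^ (s - 1) * b := hsplit
      _ ≤ M ^ s * (2 * (b - a)) := by nlinarith
      _ ≤ (s + 2) * M ^ s * (b - a) ^ (1:ℝ) := by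
            rw [Real.rpow_one]; nlinarith [mul_nonneg (mul_nonneg hs.le hMs.le) ht]
    · -- t < a : MVT
      have ha0 : 0 < a := lt_of_le_of_lt ht hcase
      obtain ⟨c, hc1, hc2, hc3⟩ := rpow_mvt s ha0 hab
      rw [hc3, Real.rpow_one]
      have hcM : c ^ (s - 1) ≤ M ^ (s - 1) :=
        Real.rpow_le_rpow (le_trans ha0.le hc1) (le_trans hc2 hbM) (by linarith)
      have h3 : M ^ (s - 1) ≤ M ^ s :=
        Real.rpow_le_rpow_of_exponent_le hM (by linarith)
      have hcpos : (0:ℝ) ≤ c ^ (s - 1) := Real.rpow_nonneg (le_trans ha0.le hc1) _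
      have hcoef : s * c ^ (s - 1) ≤ (s + 2) * M ^ s := by nlinarith
      have := mul_le_mul_of_nonneg_right hcoef ht
      linarith

/-- exponent lowering on bounded sets -/
lemma rpow_exp_lower {α β K : ℝ} (ht : 0 ≤ t) (htK : t ≤ K) (hα : 0 < α) (hαβ : α ≤ β) :
    t ^ β ≤ K ^ (β - α) * t ^ α := by
  have h' : (β - α) + α ≠ 0 := fun hX => (ne_of_gt (lt_of_lt_of_le hα hαβ)) (by linarith)
  have h2 : t ^ β = t ^ (β - α) * t ^ α := by
    rw [← Real.rpow_add' ht h']; congr 1; ring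
  rw [h2]
  exact mul_le_mul_of_nonneg_right
    (Real.rpow_le_rpow ht htK (by linarith)) (Real.rpow_nonneg ht α)

end helpers

section psi
variable {p r M B u v t : ℝ}

lemma psi_one_sided_small (hr : 1 < r) (hr2 : r ≤ 2) (u v : ℝ) :
    u * |u| ^ (r - 2) - v * |v| ^ (r - 2) ≤ 2 * |u - v| ^ (r - 1) := by
  have hne : r - 2 + 1 ≠ 0 := fun h => (ne_of_gt hr) (by linarith)
  have h21 : r - 2 + 1 = r - 1 := by ring
  have hrhs0 : (0:ℝ) ≤ |u - v| ^ (r - 1) := Real.rpow_nonneg (abs_nonneg _) _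
  have key : ∀ a b : ℝ, 0 ≤ a → 0 ≤ b → a ^ (r-1) - b ^ (r-1) ≤ 2 * |a - b| ^ (r-1) := by
    intro a b ha hb
    rcases le_or_gt a b with h | h
    · have := Real.rpow_le_rpow ha h (by linarith : (0:ℝ) ≤ r - 1)
      have : (0:ℝ) ≤ |a - b| ^ (r-1) := Real.rpow_nonneg (abs_nonneg _) _
      linarith
    · have h1 : a ^ (r-1) - b ^ (r-1) ≤ (a - b) ^ (r-1) :=
        rpow_sub_le_sub_rpow (by linarith) (by linarith) hb h.le
      rw [abs_of_pos (by linarith : (0:ℝ) < a - b)]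
      have : (0:ℝ) ≤ (a - b) ^ (r-1) := Real.rpow_nonneg (by linarith) _
      linarith
  rcases le_or_gt 0 u with hu | hu <;> rcases le_or_gt 0 v with hv | hv
  · rw [sgn_pow_of_nonneg hne hu, sgn_pow_of_nonneg hne hv, h21]
    exact key u v hu hv
  · rw [sgn_pow_of_nonneg hne hu, sgn_pow_of_nonpos hne hv.le, h21]
    have huv : |u - v| = u + (-v) := by rw [abs_of_pos (by linarith)]; ring
    rw [huv]
    have h1 : u ^ (r-1) ≤ (u + -v) ^ (r-1) :=
      Real.rpow_le_rpow hu (by linarith) (by linarith)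
    have h2 : (-v) ^ (r-1) ≤ (u + -v) ^ (r-1) :=
      Real.rpow_le_rpow (by linarith) (by linarith) (by linarith)
    linarith
  · rw [sgn_pow_of_nonpos hne hu.le, sgn_pow_of_nonneg hne hv, h21]
    have h1 : (0:ℝ) ≤ (-u) ^ (r-1) := Real.rpow_nonneg (by linarith) _
    have h2 : (0:ℝ) ≤ v ^ (r-1) := Real.rpow_nonneg hv _
    linarith
  · rw [sgn_pow_of_nonpos hne hu.le, sgn_pow_of_nonpos hne hv.le, h21]
    have := key (-v) (-u) (by linarith) (by linarith)
    rw [show |-v - -u| = |u - v| by rw [show -v - -u = -(v - u) by ring, abs_neg, abs_sub_comm]] at this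
    linarith

lemma psi_small_abs (hr : 1 < r) (hr2 : r ≤ 2) (u v : ℝ) :
    |u * |u| ^ (r - 2) - v * |v| ^ (r - 2)| ≤ 2 * |u - v| ^ (r - 1) := by
  rw [abs_sub_le_iff]
  refine ⟨psi_one_sided_small hr hr2 u v, ?_⟩
  have := psi_one_sided_small hr hr2 v u
  rwa [abs_sub_comm] at this

lemma psi_one_sided_big (hr2 : 2 < r) (hu : |u| ≤ B) (hv : |v| ≤ B) :
    u * |u| ^ (r - 2) - v * |v| ^ (r - 2) ≤ (r - 1) * B ^ (r - 2) * |u - v| := by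
  have hne : r - 2 + 1 ≠ 0 := fun h => (by linarith : ¬ (2:ℝ) < r) (by linarith) |>.elim
  have h21 : r - 2 + 1 = r - 1 := by ring
  have hB0 : 0 ≤ B := le_trans (abs_nonneg u) hu
  have hBr : (0:ℝ) ≤ B ^ (r - 2) := Real.rpow_nonneg hB0 _
  have hu' := abs_le.1 hu
  have hv' := abs_le.1 hv
  -- upper bound a^{r-1} ≤ B^{r-2} * a for 0 ≤ a ≤ B
  have bnd : ∀ a : ℝ, 0 ≤ a → a ≤ B → a ^ (r-1) ≤ B ^ (r-2) * a := by
    intro a ha haB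
    have : a ^ (r-1) = a ^ (r-2) * a := by
      rw [show r - 1 = (r-2) + 1 by ring,
        Real.rpow_add' ha (by rw [h21]; intro h; linarith), Real.rpow_one]
    rw [this]
    exact mul_le_mul_of_nonneg_right (Real.rpow_le_rpow ha haB (by linarith)) ha
  have key : ∀ a b : ℝ, 0 ≤ a → 0 ≤ b → a ≤ B → b ≤ B →
      a ^ (r-1) - b ^ (r-1) ≤ (r-1) * B ^ (r-2) * |a - b| := by
    intro a b ha hb haB hbB
    rcases le_or_gt a b with h | h
    · have h1 := Real.rpow_le_rpow ha h (by linarith : (0:ℝ) ≤ r - 1)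
      have h2 : (0:ℝ) ≤ (r-1) * B ^ (r-2) * |a - b| :=
        mul_nonneg (mul_nonneg (by linarith) hBr) (abs_nonneg _)
      linarith
    · rw [abs_of_pos (by linarith : (0:ℝ) < a - b)]
      rcases eq_or_lt_of_le hb with hb0 | hb0
      · rw [← hb0, Real.zero_rpow (by intro h; linarith : r - 1 ≠ 0)]
        have := bnd a ha haB
        nlinarith [mul_nonneg hBr ha]
      · obtain ⟨c, hc1, hc2, hc3⟩ := rpow_mvt (r-1) hb0 h.le
        rw [show r - 1 - 1 = r - 2 by ring] at hc3
        rw [hc3]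
        have hcB : c ^ (r-2) ≤ B ^ (r-2) :=
          Real.rpow_le_rpow (by linarith) (by linarith) (by linarith)
        nlinarith [mul_le_mul_of_nonneg_right hcB (by linarith : (0:ℝ) ≤ a - b)]
  rcases le_or_gt 0 u with hu0 | hu0 <;> rcases le_or_gt 0 v with hv0 | hv0
  · rw [sgn_pow_of_nonneg hne hu0, sgn_pow_of_nonneg hne hv0, h21]
    exact key u v hu0 hv0 hu'.2 hv'.2
  · rw [sgn_pow_of_nonneg hne hu0, sgn_pow_of_nonpos hne hv0.le, h21]
    have h1 := bnd u hu0 hu'.2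
    have h2 := bnd (-v) (by linarith) (by linarith)
    have huv : |u - v| = u + (-v) := by rw [abs_of_pos (by linarith)]; ring
    rw [huv]
    nlinarith [mul_nonneg hBr (by linarith : (0:ℝ) ≤ u + -v)]
  · rw [sgn_pow_of_nonpos hne hu0.le, sgn_pow_of_nonneg hne hv0, h21]
    have h1 : (0:ℝ) ≤ (-u) ^ (r-1) := Real.rpow_nonneg (by linarith) _
    have h2 : (0:ℝ) ≤ v ^ (r-1) := Real.rpow_nonneg hv0 _
    have h3 : (0:ℝ) ≤ (r-1) * B ^ (r-2) * |u - v| :=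
      mul_nonneg (mul_nonneg (by linarith) hBr) (abs_nonneg _)
    linarith
  · rw [sgn_pow_of_nonpos hne hu0.le, sgn_pow_of_nonpos hne hv0.le, h21]
    have := key (-v) (-u) (by linarith) (by linarith) (by linarith) (by linarith)
    rw [show |-v - -u| = |u - v| by rw [show -v - -u = -(v - u) by ring, abs_neg, abs_sub_comm]] at this
    linarith

lemma psi_big_abs (hr2 : 2 < r) (hu : |u| ≤ B) (hv : |v| ≤ B) :
    |u * |u| ^ (r - 2) - v * |v| ^ (r - 2)| ≤ (r - 1) * B ^ (r - 2) * |u - v| := by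
  rw [abs_sub_le_iff]
  refine ⟨psi_one_sided_big hr2 hu hv, ?_⟩
  have := psi_one_sided_big hr2 hv hu
  rwa [abs_sub_comm] at this

lemma neg_trick {q s : ℝ} (hq : q ≤ 0) (ht : 0 < t) (htB : t ≤ 2 * B) :
    B ^ q * t ^ s ≤ 2 ^ (-q) * t ^ (q + s) := by
  have hB : 0 < B := by linarith
  have h1 : B ^ q ≤ (t / 2) ^ q :=
    Real.rpow_le_rpow_of_nonpos (by linarith) (by linarith) hq
  have h2 : ((t / 2 : ℝ)) ^ q = t ^ q / 2 ^ q := Real.div_rpow ht.le (by norm_num : (0:ℝ) ≤ 2) q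
  calc B ^ q * t ^ s ≤ (t ^ q / 2 ^ q) * t ^ s := by
        rw [← h2]
        exact mul_le_mul_of_nonneg_right h1 (Real.rpow_nonneg ht.le s)
  _ = 2 ^ (-q) * t ^ (q + s) := by
        rw [Real.rpow_neg (by norm_num : (0:ℝ) ≤ 2), Real.rpow_add ht q s]
        ring

end psi

section T
variable {p r M : ℝ}

lemma T2lem (hp : 1 < p) (hr : 1 < r) (hM : 1 ≤ M) :
    ∃ C > 0, ∀ u v B : ℝ, |u| ≤ B → |v| ≤ B → B ≤ M →
      B ^ (p - r) * |u * |u| ^ (r - 2) - v * |v| ^ (r - 2)| ≤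
        C * |u - v| ^ (min 1 (min (p - 1) (r - 1))) := by
  set α := min 1 (min (p-1) (r-1)) with hαdef
  have hα0 : 0 < α := lt_min one_pos (lt_min (by linarith) (by linarith))
  have hα1 : α ≤ 1 := min_le_left _ _
  have hαp : α ≤ p - 1 := le_trans (min_le_right _ _) (min_le_left _ _)
  have hαr : α ≤ r - 1 := le_trans (min_le_right _ _) (min_le_right _ _)
  have hM0 : (0:ℝ) < M := by linarith
  have h2M1 : (1:ℝ) ≤ 2 * M := by linarith
  -- common setup, given u ≠ v
  have setup : ∀ u v B : ℝ, |u| ≤ B → |v| ≤ B → B ≤ M → u ≠ v →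
      0 < |u - v| ∧ 0 < B ∧ |u - v| ≤ 2 * B ∧ |u - v| ≤ 2 * M := by
    intro u v B hu hv hBM huv
    have ht : 0 < |u - v| := abs_pos.2 (sub_ne_zero.2 huv)
    have habs : |u - v| ≤ |u| + |v| := by
      have := norm_sub_le u v
      simpa [Real.norm_eq_abs] using this
    have hB0 : 0 < B := by
      rcases lt_or_ge 0 B with h | h
      · exact h
      · exfalso; apply huv
        have h1 : |u| = 0 := le_antisymm (hu.trans h) (abs_nonneg u)
        have h2 : |v| = 0 := le_antisymm (hv.trans h) (abs_nonneg v)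
        rw [abs_eq_zero.1 h1, abs_eq_zero.1 h2]
    exact ⟨ht, hB0, by linarith, by linarith⟩
  rcases le_or_gt r 2 with h2 | h2
  · rcases le_or_gt r p with hrp | hrp
    · -- r ≤ 2, r ≤ p
      refine ⟨2 * M ^ (p-r) * (2*M) ^ ((r-1) - α), by positivity, ?_⟩
      intro u v B hu hv hBM
      rcases eq_or_ne u v with huv | huv
      · subst huv; simp only [sub_self, abs_zero, mul_zero]; positivity
      obtain ⟨ht, hB0, htB, ht2M⟩ := setup u v B hu hv hBM huv
      calc B ^ (p-r) * |u * |u| ^ (r - 2) - v * |v| ^ (r - 2)|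
          ≤ M ^ (p-r) * (2 * |u - v| ^ (r-1)) :=
            mul_le_mul (Real.rpow_le_rpow hB0.le hBM (by linarith))
              (psi_small_abs hr h2 u v) (abs_nonneg _) (Real.rpow_nonneg hM0.le _)
        _ = 2 * M ^ (p-r) * |u - v| ^ (r-1) := by ring
        _ ≤ 2 * M ^ (p-r) * ((2*M) ^ ((r-1) - α) * |u - v| ^ α) := by
            apply mul_le_mul_of_nonneg_left
              (rpow_exp_lower (abs_nonneg _) ht2M hα0 hαr) (by positivity)
        _ = 2 * M ^ (p-r) * (2*M) ^ ((r-1) - α) * |u - v| ^ α := by ring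
    · -- r ≤ 2, p < r
      refine ⟨2 * 2 ^ (r-p) * (2*M) ^ ((p-1) - α), by positivity, ?_⟩
      intro u v B hu hv hBM
      rcases eq_or_ne u v with huv | huv
      · subst huv; simp only [sub_self, abs_zero, mul_zero]; positivity
      obtain ⟨ht, hB0, htB, ht2M⟩ := setup u v B hu hv hBM huv
      have hNT := neg_trick (s := r - 1) (show p - r ≤ 0 by linarith) ht htB
      rw [show -(p-r) = r - p by ring, show (p-r) + (r-1) = p - 1 by ring] at hNT
      calc B ^ (p-r) * |u * |u| ^ (r - 2) - v * |v| ^ (r - 2)|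
          ≤ B ^ (p-r) * (2 * |u - v| ^ (r-1)) :=
            mul_le_mul_of_nonneg_left (psi_small_abs hr h2 u v)
              (Real.rpow_nonneg hB0.le _)
        _ = 2 * (B ^ (p-r) * |u - v| ^ (r-1)) := by ring
        _ ≤ 2 * (2 ^ (r-p) * |u - v| ^ (p-1)) := by linarith
        _ ≤ 2 * 2 ^ (r-p) * ((2*M) ^ ((p-1) - α) * |u - v| ^ α) := by
            rw [mul_assoc]
            apply mul_le_mul_of_nonneg_left _ (by norm_num)
            apply mul_le_mul_of_nonneg_left
              (rpow_exp_lower (abs_nonneg _) ht2M hα0 hαp) (by positivity)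
        _ = 2 * 2 ^ (r-p) * (2*M) ^ ((p-1) - α) * |u - v| ^ α := by ring
  · rcases le_or_gt 2 p with hp2 | hp2
    · -- 2 < r, 2 ≤ p
      refine ⟨(r-1) * M ^ (p-2) * (2*M) ^ (1 - α), mul_pos (mul_pos (show (0:ℝ) < r - 1 by linarith) (Real.rpow_pos_of_pos hM0 _)) (Real.rpow_pos_of_pos (by linarith) _), ?_⟩
      have hCnn : (0:ℝ) ≤ (r-1) * M ^ (p-2) * (2*M) ^ (1 - α) := le_of_lt (mul_pos (mul_pos (show (0:ℝ) < r - 1 by linarith) (Real.rpow_pos_of_pos hM0 _)) (Real.rpow_pos_of_pos (by linarith) _))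
      intro u v B hu hv hBM
      rcases eq_or_ne u v with huv | huv
      · subst huv; simp only [sub_self, abs_zero, mul_zero]
        exact mul_nonneg hCnn (Real.rpow_nonneg le_rfl _)
      obtain ⟨ht, hB0, htB, ht2M⟩ := setup u v B hu hv hBM huv
      have hBB : B ^ (p-r) * B ^ (r-2) = B ^ (p-2) := by
        rw [← Real.rpow_add hB0]; congr 1; ring
      have hlow : |u - v| ≤ (2*M) ^ (1 - α) * |u - v| ^ α := by
        have := rpow_exp_lower (abs_nonneg (u - v)) ht2M hα0 hα1
        rwa [Real.rpow_one] at this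
      calc B ^ (p-r) * |u * |u| ^ (r - 2) - v * |v| ^ (r - 2)|
          ≤ B ^ (p-r) * ((r-1) * B ^ (r-2) * |u - v|) :=
            mul_le_mul_of_nonneg_left (psi_big_abs h2 hu hv)
              (Real.rpow_nonneg hB0.le _)
        _ = (r-1) * (B ^ (p-r) * B ^ (r-2)) * |u - v| := by ring
        _ = (r-1) * B ^ (p-2) * |u - v| := by rw [hBB]
        _ ≤ (r-1) * M ^ (p-2) * |u - v| := by
            apply mul_le_mul_of_nonneg_right _ (abs_nonneg _)
            exact mul_le_mul_of_nonneg_left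
              (Real.rpow_le_rpow hB0.le hBM (by linarith)) (by linarith)
        _ ≤ (r-1) * M ^ (p-2) * ((2*M) ^ (1 - α) * |u - v| ^ α) := by
            apply mul_le_mul_of_nonneg_left hlow (mul_nonneg (by linarith) (Real.rpow_nonneg hM0.le _))
        _ = (r-1) * M ^ (p-2) * (2*M) ^ (1 - α) * |u - v| ^ α := by ring
    · -- 2 < r, p < 2
      refine ⟨(r-1) * 2 ^ (2-p) * (2*M) ^ ((p-1) - α), mul_pos (mul_pos (show (0:ℝ) < r - 1 by linarith) (Real.rpow_pos_of_pos two_pos _)) (Real.rpow_pos_of_pos (by linarith) _), ?_⟩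
      have hCnn : (0:ℝ) ≤ (r-1) * 2 ^ (2-p) * (2*M) ^ ((p-1) - α) := le_of_lt (mul_pos (mul_pos (show (0:ℝ) < r - 1 by linarith) (Real.rpow_pos_of_pos two_pos _)) (Real.rpow_pos_of_pos (by linarith) _))
      intro u v B hu hv hBM
      rcases eq_or_ne u v with huv | huv
      · subst huv; simp only [sub_self, abs_zero, mul_zero]
        exact mul_nonneg hCnn (Real.rpow_nonneg le_rfl _)
      obtain ⟨ht, hB0, htB, ht2M⟩ := setup u v B hu hv hBM huv
      have hNT := neg_trick (s := (1:ℝ)) (show p - 2 ≤ 0 by linarith) ht htB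
      rw [show -(p-2) = 2 - p by ring, show (p-2) + 1 = p - 1 by ring,
        Real.rpow_one] at hNT
      calc B ^ (p-r) * |u * |u| ^ (r - 2) - v * |v| ^ (r - 2)|
          ≤ B ^ (p-r) * ((r-1) * B ^ (r-2) * |u - v|) :=
            mul_le_mul_of_nonneg_left (psi_big_abs h2 hu hv)
              (Real.rpow_nonneg hB0.le _)
        _ = (r-1) * (B ^ (p-r) * B ^ (r-2)) * |u - v| := by ring
        _ = (r-1) * B ^ (p-2) * |u - v| := by
            rw [← Real.rpow_add hB0]; congr 2; ring
        _ = (r-1) * (B ^ (p-2) * |u - v|) := by ring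
        _ ≤ (r-1) * (2 ^ (2-p) * |u - v| ^ (p-1)) := by
            apply mul_le_mul_of_nonneg_left hNT (by linarith)
        _ ≤ (r-1) * 2 ^ (2-p) * ((2*M) ^ ((p-1) - α) * |u - v| ^ α) := by
            rw [mul_assoc]
            apply mul_le_mul_of_nonneg_left _ (by linarith)
            apply mul_le_mul_of_nonneg_left
              (rpow_exp_lower (abs_nonneg _) ht2M hα0 hαp) (by positivity)
        _ = (r-1) * 2 ^ (2-p) * (2*M) ^ ((p-1) - α) * |u - v| ^ α := by ring

end T

section T1
variable {p r M : ℝ}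

lemma T1lem (hp : 1 < p) (hr : 1 < r) (hM : 1 ≤ M) :
    ∃ C > 0, ∀ a b : ℝ, 0 ≤ a → a ≤ b → b ≤ M →
      a ^ (r-1) * |a ^ (p-r) - b ^ (p-r)| ≤ C * (b - a) ^ (min 1 (p-1)) := by
  have hγ0 : 0 < min 1 (p-1) := lt_min one_pos (by linarith)
  have hγ1 : min 1 (p-1) ≤ 1 := min_le_left _ _
  have hγp : min 1 (p-1) ≤ p - 1 := min_le_right _ _
  have hM0 : (0:ℝ) < M := by linarith
  rcases le_or_gt r p with hrp | hrp
  · -- p ≥ r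
    refine ⟨(p+1) * M ^ (p-1), mul_pos (by linarith) (Real.rpow_pos_of_pos hM0 _), ?_⟩
    intro a b ha hab hbM
    have hb : 0 ≤ b := le_trans ha hab
    have hmono : a ^ (p-r) ≤ b ^ (p-r) := Real.rpow_le_rpow ha hab (by linarith)
    rw [abs_sub_comm, abs_of_nonneg (by linarith)]
    have hpr1 : (r-1) + (p-r) ≠ 0 := fun h => (by linarith : p ≠ 1) (by linarith)
    have e1 : a ^ (r-1) * a ^ (p-r) = a ^ (p-1) := by
      rw [← Real.rpow_add' ha hpr1]; congr 1; ring
    have e2 : b ^ (r-1) * b ^ (p-r) = b ^ (p-1) := by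
      rw [← Real.rpow_add' hb hpr1]; congr 1; ring
    have h3 : a ^ (r-1) * b ^ (p-r) ≤ b ^ (r-1) * b ^ (p-r) :=
      mul_le_mul_of_nonneg_right (Real.rpow_le_rpow ha hab (by linarith))
        (Real.rpow_nonneg hb _)
    have h4 := pow_diff_holder (show (0:ℝ) < p-1 by linarith) hM ha hab hbM
    rw [show p - 1 + 2 = p + 1 by ring] at h4
    have expand : a ^ (r-1) * (b ^ (p-r) - a ^ (p-r))
        = a ^ (r-1) * b ^ (p-r) - a ^ (r-1) * a ^ (p-r) := by ring
    rw [expand, e1]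
    linarith [e2 ▸ h3]
  · -- p < r
    refine ⟨(1 + (r-p)) * M ^ ((p-1) - min 1 (p-1)),
      mul_pos (by linarith) (Real.rpow_pos_of_pos hM0 _), ?_⟩
    intro a b ha hab hbM
    have hb : 0 ≤ b := le_trans ha hab
    have ht0 : 0 ≤ b - a := by linarith
    have htM : b - a ≤ M := by linarith
    have hCnn : (0:ℝ) ≤ (1 + (r-p)) * M ^ ((p-1) - min 1 (p-1)) :=
      le_of_lt (mul_pos (by linarith) (Real.rpow_pos_of_pos hM0 _))
    rcases eq_or_lt_of_le ha with ha0 | ha0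
    · subst ha0
      rw [Real.zero_rpow (show r - 1 ≠ 0 by intro h; exact (by linarith : r ≠ 1) (by linarith)), zero_mul]
      exact mul_nonneg hCnn (Real.rpow_nonneg (by linarith) _)
    · have hmono : b ^ (p-r) ≤ a ^ (p-r) :=
        Real.rpow_le_rpow_of_nonpos ha0 hab (by linarith)
      rw [abs_of_nonneg (by linarith)]
      -- key: bound by (1 + (r-p)) * M^{(p-1)-γ} * (b-a)^γ
      rcases le_or_gt a (b - a) with hc | hc
      · -- a ≤ b - a
        have e1 : a ^ (r-1) * a ^ (p-r) = a ^ (p-1) := by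
          rw [← Real.rpow_add ha0]; congr 1; ring
        have h5 : a ^ (r-1) * (a ^ (p-r) - b ^ (p-r)) ≤ a ^ (p-1) := by
          rw [← e1]
          apply mul_le_mul_of_nonneg_left _ (Real.rpow_nonneg ha0.le _)
          have : (0:ℝ) ≤ b ^ (p-r) := Real.rpow_nonneg hb _
          linarith
        have h6 : a ^ (p-1) ≤ (b-a) ^ (p-1) :=
          Real.rpow_le_rpow ha0.le hc (by linarith)
        have h7 : (b-a) ^ (p-1) ≤ M ^ ((p-1) - min 1 (p-1)) * (b-a) ^ (min 1 (p-1)) :=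
          rpow_exp_lower ht0 htM hγ0 hγp
        have h8 : (0:ℝ) ≤ M ^ ((p-1) - min 1 (p-1)) * (b-a) ^ (min 1 (p-1)) := by
          exact mul_nonneg (Real.rpow_nonneg hM0.le _) (Real.rpow_nonneg ht0 _)
        nlinarith [mul_nonneg (Real.rpow_nonneg hM0.le ((p-1) - min 1 (p-1))) (Real.rpow_nonneg ht0 (min 1 (p-1)))]
      · -- b - a < a, use MVT with exponent p - r on [a,b]
        obtain ⟨c, hc1, hc2, hc3⟩ := rpow_mvt (p-r) ha0 hab
        have hc0 : 0 < c := lt_of_lt_of_le ha0 hc1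
        have hkey : a ^ (p-r) - b ^ (p-r) = (r-p) * c ^ (p-r-1) * (b-a) := by
          linear_combination -hc3
        have hcc : c ^ (p-r-1) ≤ a ^ (p-r-1) :=
          Real.rpow_le_rpow_of_nonpos ha0 hc1 (by linarith)
        have hcnn : (0:ℝ) ≤ c ^ (p-r-1) := Real.rpow_nonneg hc0.le _
        have step1 : a ^ (r-1) * (a ^ (p-r) - b ^ (p-r))
            ≤ (r-p) * (a ^ (r-1) * a ^ (p-r-1)) * (b-a) := by
          rw [hkey]
          have := mul_le_mul_of_nonneg_right hcc ht0
          have hann : (0:ℝ) ≤ a ^ (r-1) := Real.rpow_nonneg ha0.le _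
          nlinarith [mul_le_mul_of_nonneg_left (mul_le_mul_of_nonneg_right hcc ht0) hann]
        have e2 : a ^ (r-1) * a ^ (p-r-1) = a ^ (p-2) := by
          rw [← Real.rpow_add ha0]; congr 1; ring
        rw [e2] at step1
        rcases le_or_gt 2 p with hp2 | hp2
        · -- p ≥ 2 : γ = 1
          have hγ : min 1 (p-1) = 1 := min_eq_left (by linarith)
          have h9 : a ^ (p-2) ≤ M ^ (p-2) :=
            Real.rpow_le_rpow ha0.le (le_trans hab hbM) (by linarith)
          have h10 : (b-a) ^ (min 1 (p-1)) = b - a := by rw [hγ, Real.rpow_one]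
          rw [hγ, show (p-1) - 1 = p - 2 by ring] at *
          calc a ^ (r-1) * (a ^ (p-r) - b ^ (p-r)) ≤ (r-p) * a ^ (p-2) * (b-a) := step1
            _ ≤ (r-p) * M ^ (p-2) * (b-a) := by
                apply mul_le_mul_of_nonneg_right _ ht0
                exact mul_le_mul_of_nonneg_left h9 (by linarith)
            _ ≤ (1 + (r-p)) * M ^ (p-2) * (b-a) ^ (1:ℝ) := by
                rw [Real.rpow_one]
                apply mul_le_mul_of_nonneg_right _ ht0
                apply mul_le_mul_of_nonneg_right _ (Real.rpow_nonneg hM0.le _)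
                linarith
        · -- p < 2 : γ = p - 1
          have hγ : min 1 (p-1) = p - 1 := min_eq_right (by linarith)
          rcases eq_or_lt_of_le ht0 with heq | ht0'
          · have hba : b = a := by linarith
            rw [hba, sub_self, mul_zero]
            exact mul_nonneg hCnn (Real.rpow_nonneg (by linarith) _)
          · have h9 : a ^ (p-2) ≤ (b-a) ^ (p-2) :=
              Real.rpow_le_rpow_of_nonpos ht0' hc.le (by linarith)
            have e3 : (b-a) ^ (p-2) * (b-a) = (b-a) ^ (p-1) := by
              rw [show p - 1 = (p-2) + 1 by ring,
                Real.rpow_add' ht0 (fun h => (by linarith : p ≠ 1) (by linarith)),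
                Real.rpow_one]
            rw [hγ, sub_self, Real.rpow_zero, mul_one]
            calc a ^ (r-1) * (a ^ (p-r) - b ^ (p-r)) ≤ (r-p) * a ^ (p-2) * (b-a) := step1
              _ ≤ (r-p) * (b-a) ^ (p-2) * (b-a) :=
                  mul_le_mul_of_nonneg_right
                    (mul_le_mul_of_nonneg_left h9 (by linarith)) ht0
              _ = (r-p) * (b-a) ^ (p-1) := by rw [mul_assoc, e3]
              _ ≤ (1 + (r-p)) * (b-a) ^ (p-1) := by
                  nlinarith [Real.rpow_nonneg ht0 (p-1)]
        
end T1



/-- The gradient of `x ↦ ‖x‖_{ℓ_r}^p`, with components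
`p x_l |x_l|^{r-2} ‖x‖_{ℓ_r}^{p-r}`. -/
noncomputable def gradLrp (d : ℕ) (p r : ℝ) (x : EuclideanSpace ℝ (Fin d)) :
    EuclideanSpace ℝ (Fin d) :=
  (EuclideanSpace.equiv (Fin d) ℝ).symm
    (fun l => p * x l * |x l| ^ (r - 2) * (∑ i, |x i| ^ r) ^ ((p - r) / r))

lemma gradLrp_apply (d : ℕ) (p r : ℝ) (x : EuclideanSpace ℝ (Fin d)) (l : Fin d) :
    gradLrp d p r x l = p * x l * |x l| ^ (r - 2) * (∑ i, |x i| ^ r) ^ ((p - r) / r) := rfl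

section grad
variable {d : ℕ} {p r : ℝ}

lemma coord_abs_le_norm (x : EuclideanSpace ℝ (Fin d)) (i : Fin d) : |x i| ≤ ‖x‖ := by
  rw [EuclideanSpace.norm_eq]
  have h : |x i| = Real.sqrt (‖x i‖ ^ 2) := by
    rw [Real.sqrt_sq (norm_nonneg _), Real.norm_eq_abs]
  rw [h]
  apply Real.sqrt_le_sqrt
  exact Finset.single_le_sum (f := fun j => ‖x j‖ ^ 2) (fun j _ => sq_nonneg _)
    (Finset.mem_univ i)

lemma grad_part (hp : 1 < p) (hr : 1 < r) (x : EuclideanSpace ℝ (Fin d)) :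
    HasGradientAt (fun x : EuclideanSpace ℝ (Fin d) => (∑ i, |x i| ^ r) ^ (p / r))
      (gradLrp d p r x) x := by
  have hr0 : (0:ℝ) < r := by linarith
  have hp0 : (0:ℝ) < p := by linarith
  have hpr : p / r ≠ 0 := ne_of_gt (div_pos hp0 hr0)
  rw [hasGradientAt_iff_hasFDerivAt]
  rcases eq_or_ne x 0 with hx | hx
  · subst hx
    have hg0 : gradLrp d p r 0 = 0 := by
      ext l
      simp [gradLrp_apply]
    rw [hg0, map_zero]
    rw [hasFDerivAt_iff_isLittleO_nhds_zero]
    have hN0 : (∑ i, |(0 : EuclideanSpace ℝ (Fin d)) i| ^ r) = 0 := by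
      simp [Real.zero_rpow (ne_of_gt hr0)]
    rw [Asymptotics.isLittleO_iff]
    intro c hc
    have htend : Filter.Tendsto
        (fun h : EuclideanSpace ℝ (Fin d) => (d:ℝ)^(p/r) * ‖h‖^(p-1)) (nhds 0) (nhds 0) := by
      have h1 : Filter.Tendsto (fun h : EuclideanSpace ℝ (Fin d) => ‖h‖)
          (nhds 0) (nhds (0:ℝ)) := tendsto_norm_zero
      have h2 : ContinuousAt (fun z : ℝ => (d:ℝ)^(p/r) * z^(p-1)) 0 :=
        continuousAt_const.mul (Real.continuousAt_rpow_const 0 (p-1) (Or.inr (by linarith)))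
      have h3 := h2.tendsto.comp h1
      simpa [Function.comp_def, Real.zero_rpow (show p - 1 ≠ 0 by intro hX; linarith)] using h3
    filter_upwards [htend.eventually_le_const hc] with h hh
    simp only [zero_add, ContinuousLinearMap.zero_apply, sub_zero, hN0]
    rw [Real.zero_rpow hpr, sub_zero]
    have hNh : 0 ≤ ∑ i, |h i| ^ r :=
      Finset.sum_nonneg fun i _ => Real.rpow_nonneg (abs_nonneg _) _
    have hb1 : (∑ i, |h i| ^ r) ≤ (d:ℝ) * ‖h‖ ^ r := by
      calc ∑ i, |h i| ^ r ≤ ∑ _i : Fin d, ‖h‖ ^ r :=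
        Finset.sum_le_sum fun i _ =>
          Real.rpow_le_rpow (abs_nonneg _) (coord_abs_le_norm h i) hr0.le
      _ = (d:ℝ) * ‖h‖ ^ r := by
        simp [Finset.sum_const, Finset.card_univ, nsmul_eq_mul]
    have hb2 : (∑ i, |h i| ^ r) ^ (p/r) ≤ ((d:ℝ) * ‖h‖ ^ r) ^ (p/r) :=
      Real.rpow_le_rpow hNh hb1 (by positivity)
    have hb3 : ((d:ℝ) * ‖h‖ ^ r) ^ (p/r) = (d:ℝ)^(p/r) * ‖h‖ ^ p := by
      rw [Real.mul_rpow (Nat.cast_nonneg d) (Real.rpow_nonneg (norm_nonneg _) _),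
        ← Real.rpow_mul (norm_nonneg _)]
      congr 1
      field_simp
    have hb4 : ‖h‖ ^ p = ‖h‖ ^ (p-1) * ‖h‖ := by
      nth_rewrite 1 [show p = (p-1)+1 by ring]
      rw [Real.rpow_add' (norm_nonneg _) (by intro hX; linarith), Real.rpow_one]
    rw [Real.norm_eq_abs, abs_of_nonneg (Real.rpow_nonneg hNh _)]
    calc (∑ i, |h i| ^ r) ^ (p/r) ≤ (d:ℝ)^(p/r) * (‖h‖^(p-1) * ‖h‖) := by
          rw [← hb4]; rw [hb3] at hb2; exact hb2
    _ = ((d:ℝ)^(p/r) * ‖h‖^(p-1)) * ‖h‖ := by ring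
    _ ≤ c * ‖h‖ := mul_le_mul_of_nonneg_right hh (norm_nonneg _)
  · have hNpos : 0 < ∑ i, |x i| ^ r := by
      obtain ⟨i, hi⟩ : ∃ i, x i ≠ 0 := by
        by_contra hcon
        push_neg at hcon
        exact hx (by ext i; exact hcon i)
      exact Finset.sum_pos' (fun j _ => Real.rpow_nonneg (abs_nonneg _) _)
        ⟨i, Finset.mem_univ i, Real.rpow_pos_of_pos (abs_pos.2 hi) _⟩
    have hNder : HasFDerivAt (fun y : EuclideanSpace ℝ (Fin d) => ∑ i, |y i| ^ r)
        (∑ i, (r * |x i| ^ (r-2) * x i) •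
          (EuclideanSpace.proj i : EuclideanSpace ℝ (Fin d) →L[ℝ] ℝ)) x := by
      apply HasFDerivAt.fun_sum
      intro i _
      have h1 : HasFDerivAt (fun y : EuclideanSpace ℝ (Fin d) => y i)
          (EuclideanSpace.proj (𝕜 := ℝ) i) x := by
        exact (EuclideanSpace.proj (𝕜 := ℝ) (ι := Fin d) i).hasFDerivAt
      exact (hasDerivAt_abs_rpow (x i) hr).comp_hasFDerivAt x h1
    have hcomp := hNder.rpow_const (p := p/r) (Or.inl (ne_of_gt hNpos))
    refine hcomp.congr_fderiv (Eq.symm ?_)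
    apply ContinuousLinearMap.ext
    intro y
    rw [InnerProductSpace.toDual_apply_apply, PiLp.inner_apply]
    simp only [ContinuousLinearMap.smul_apply, ContinuousLinearMap.sum_apply,
      smul_eq_mul, RCLike.inner_apply, conj_trivial, gradLrp_apply, PiLp.proj_apply]
    rw [Finset.mul_sum]
    apply Finset.sum_congr rfl
    intro i _
    have he : (∑ j, |x j| ^ r) ^ ((p-r)/r) = (∑ j, |x j| ^ r) ^ (p/r - 1) := by
      congr 1; field_simp
    rw [he]
    have hrne : r ≠ 0 := ne_of_gt (by linarith)
    field_simp

end grad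

section main
variable {d : ℕ} {p r : ℝ}

lemma key_est (hd : 1 ≤ d) (hp : 1 < p) (hr : 1 < r) :
    ∃ C > 0, ∀ l : Fin d, ∀ x ∈ Metric.closedBall (0 : EuclideanSpace ℝ (Fin d)) 2,
      ∀ y ∈ Metric.closedBall (0 : EuclideanSpace ℝ (Fin d)) 2,
      (∑ i, |x i| ^ r) ≤ (∑ i, |y i| ^ r) →
      |gradLrp d p r x l - gradLrp d p r y l| ≤
        C * ‖x - y‖ ^ (min 1 (min (p - 1) (r - 1))) := by
  have hd1 : (1:ℝ) ≤ d := by exact_mod_cast hd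
  have hd0 : (0:ℝ) < d := by linarith
  set M := 2 * (d:ℝ) with hMdef
  have hM1 : (1:ℝ) ≤ M := by rw [hMdef]; linarith
  have hM0 : (0:ℝ) < M := by linarith
  have hr0 : (0:ℝ) < r := by linarith
  have hp0 : (0:ℝ) < p := by linarith
  obtain ⟨C1, hC1, hT1⟩ := T1lem (M := M) hp hr hM1
  obtain ⟨C2, hC2, hT2⟩ := T2lem (M := M) hp hr hM1
  have hα0 : 0 < min 1 (min (p-1) (r-1)) := lt_min one_pos (lt_min (by linarith) (by linarith))
  have hγ0 : 0 < min 1 (p-1) := lt_min one_pos (by linarith)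
  have hγα : min 1 (min (p-1) (r-1)) ≤ min 1 (p-1) :=
    le_min (min_le_left _ _) (le_trans (min_le_right _ _) (min_le_left _ _))
  set α := min 1 (min (p-1) (r-1)) with hαdef
  have hdα : (0:ℝ) < (d:ℝ) ^ α := Real.rpow_pos_of_pos hd0 _
  refine ⟨p * (C1 * M ^ (min 1 (p-1) - α) * (d:ℝ) ^ α + C2),
    mul_pos hp0 (add_pos (mul_pos (mul_pos hC1 (Real.rpow_pos_of_pos hM0 _)) hdα) hC2), ?_⟩
  intro l x hx y hy hNle
  have hNx0 : 0 ≤ ∑ i, |x i| ^ r :=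
    Finset.sum_nonneg fun i _ => Real.rpow_nonneg (abs_nonneg _) _
  have hNy0 : 0 ≤ ∑ i, |y i| ^ r :=
    Finset.sum_nonneg fun i _ => Real.rpow_nonneg (abs_nonneg _) _
  set A := (∑ i, |x i| ^ r) ^ (1/r) with hAdef
  set B := (∑ i, |y i| ^ r) ^ (1/r) with hBdef
  have hA0 : 0 ≤ A := Real.rpow_nonneg hNx0 _
  have hB0 : 0 ≤ B := Real.rpow_nonneg hNy0 _
  have hAB : A ≤ B := Real.rpow_le_rpow hNx0 hNle (by positivity)
  have hcoord : ∀ (z : EuclideanSpace ℝ (Fin d)) (i : Fin d),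
      |z i| ≤ (∑ j, |z j| ^ r) ^ (1/r) := by
    intro z i
    have h1 : |z i| ^ r ≤ ∑ j, |z j| ^ r :=
      Finset.single_le_sum (fun j _ => Real.rpow_nonneg (abs_nonneg _) _) (Finset.mem_univ i)
    have h2 : (|z i| ^ r) ^ (1/r) ≤ (∑ j, |z j| ^ r) ^ (1/r) :=
      Real.rpow_le_rpow (Real.rpow_nonneg (abs_nonneg _) _) h1 (by positivity)
    rwa [← Real.rpow_mul (abs_nonneg _), mul_one_div, div_self (ne_of_gt hr0),
      Real.rpow_one] at h2
  have hdpow : (d:ℝ) ^ (1/r) ≤ (d:ℝ) := by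
    calc (d:ℝ) ^ (1/r) ≤ (d:ℝ) ^ (1:ℝ) :=
      Real.rpow_le_rpow_of_exponent_le hd1 (by rw [div_le_one hr0]; exact hr.le)
    _ = (d:ℝ) := Real.rpow_one _
  have hsum_le : ∀ (z : EuclideanSpace ℝ (Fin d)) (K : ℝ), 0 ≤ K → ‖z‖ ≤ K →
      (∑ j, |z j| ^ r) ^ (1/r) ≤ (d:ℝ) * K := by
    intro z K hK hzK
    have h1 : (∑ j, |z j| ^ r) ≤ (d:ℝ) * K ^ r := by
      calc ∑ j, |z j| ^ r ≤ ∑ _j : Fin d, K ^ r :=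
        Finset.sum_le_sum fun j _ =>
          Real.rpow_le_rpow (abs_nonneg _) (le_trans (coord_abs_le_norm z j) hzK) hr0.le
      _ = (d:ℝ) * K ^ r := by simp [Finset.sum_const, Finset.card_univ, nsmul_eq_mul]
    have h2 : (∑ j, |z j| ^ r) ^ (1/r) ≤ ((d:ℝ) * K ^ r) ^ (1/r) :=
      Real.rpow_le_rpow (Finset.sum_nonneg fun j _ => Real.rpow_nonneg (abs_nonneg _) _)
        h1 (by positivity)
    have h3 : ((d:ℝ) * K ^ r) ^ (1/r) = (d:ℝ) ^ (1/r) * K := by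
      rw [Real.mul_rpow (Nat.cast_nonneg d) (Real.rpow_nonneg hK _),
        ← Real.rpow_mul hK, mul_one_div, div_self (ne_of_gt hr0), Real.rpow_one]
    have h4 : (d:ℝ) ^ (1/r) * K ≤ (d:ℝ) * K := mul_le_mul_of_nonneg_right hdpow hK
    rw [h3] at h2
    linarith
  have hx2 : ‖x‖ ≤ 2 := by rwa [Metric.mem_closedBall, dist_zero_right] at hx
  have hy2 : ‖y‖ ≤ 2 := by rwa [Metric.mem_closedBall, dist_zero_right] at hy
  have hAM : A ≤ M := by
    have := hsum_le x 2 (by norm_num) hx2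
    rw [hMdef]; rw [hAdef]; linarith
  have hBM : B ≤ M := by
    have := hsum_le y 2 (by norm_num) hy2
    rw [hMdef]; rw [hBdef]; linarith
  -- Minkowski
  have hmink : B ≤ A + (∑ i, |x i - y i| ^ r) ^ (1/r) := by
    have hLp := Real.Lp_add_le Finset.univ (fun i => x i) (fun i => y i - x i) hr.le
    have he1 : (∑ i, |x i + (y i - x i)| ^ r) = ∑ i, |y i| ^ r := by
      apply Finset.sum_congr rfl; intro i _; congr 1; ring
    have he2 : (∑ i, |y i - x i| ^ r) = ∑ i, |x i - y i| ^ r := by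
      apply Finset.sum_congr rfl; intro i _; rw [abs_sub_comm]
    rw [he1, he2] at hLp
    exact hLp
  have hD : (∑ i, |x i - y i| ^ r) ^ (1/r) ≤ (d:ℝ) * ‖x - y‖ := by
    have hsub : ∀ i, x i - y i = (x - y) i := by
      intro i; simp
    calc (∑ i, |x i - y i| ^ r) ^ (1/r) = (∑ i, |(x - y) i| ^ r) ^ (1/r) := by
          congr 1
    _ ≤ (d:ℝ) * ‖x - y‖ := hsum_le (x - y) ‖x - y‖ (norm_nonneg _) le_rfl
  have htd : B - A ≤ (d:ℝ) * ‖x - y‖ := by linarith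
  -- rewrite components
  have hAe : (∑ i, |x i| ^ r) ^ ((p-r)/r) = A ^ (p - r) := by
    rw [hAdef, ← Real.rpow_mul hNx0]
    congr 1; field_simp
  have hBe : (∑ i, |y i| ^ r) ^ ((p-r)/r) = B ^ (p - r) := by
    rw [hBdef, ← Real.rpow_mul hNy0]
    congr 1; field_simp
  have hgx : gradLrp d p r x l = p * ((x l * |x l| ^ (r-2)) * A ^ (p-r)) := by
    rw [gradLrp_apply, hAe]; ring
  have hgy : gradLrp d p r y l = p * ((y l * |y l| ^ (r-2)) * B ^ (p-r)) := by
    rw [gradLrp_apply, hBe]; ring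
  have hne : r - 2 + 1 ≠ 0 := fun h => by linarith
  have hψx : |x l * |x l| ^ (r-2)| ≤ A ^ (r-1) := by
    rw [abs_sgn_pow hne, show r - 2 + 1 = r - 1 by ring]
    exact Real.rpow_le_rpow (abs_nonneg _) (hcoord x l) (by linarith)
  -- term 1
  have hT1x : A ^ (r-1) * |A ^ (p-r) - B ^ (p-r)| ≤ C1 * (B - A) ^ (min 1 (p-1)) :=
    hT1 A B hA0 hAB hBM
  have hlow : (B - A) ^ (min 1 (p-1)) ≤ M ^ (min 1 (p-1) - α) * (B - A) ^ α :=
    rpow_exp_lower (by linarith) (by linarith) hα0 hγα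
  have hBA : (B - A) ^ α ≤ (d:ℝ) ^ α * ‖x - y‖ ^ α := by
    rw [← Real.mul_rpow (Nat.cast_nonneg d) (norm_nonneg _)]
    exact Real.rpow_le_rpow (by linarith) htd hα0.le
  -- term 2
  have hT2x : B ^ (p-r) * |(x l * |x l| ^ (r-2)) - (y l * |y l| ^ (r-2))| ≤
      C2 * |x l - y l| ^ α :=
    hT2 (x l) (y l) B (le_trans (hcoord x l) hAB) (hcoord y l) hBM
  have hcl : |x l - y l| ^ α ≤ ‖x - y‖ ^ α := by
    apply Real.rpow_le_rpow (abs_nonneg _) _ hα0.le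
    have := coord_abs_le_norm (x - y) l
    simpa using this
  have hBpr : 0 ≤ B ^ (p-r) := Real.rpow_nonneg hB0 _
  have habs1 : 0 ≤ |A ^ (p-r) - B ^ (p-r)| := abs_nonneg _
  have hψx0 : 0 ≤ |x l * |x l| ^ (r-2)| := abs_nonneg _
  have hnα : 0 ≤ ‖x - y‖ ^ α := Real.rpow_nonneg (norm_nonneg _) _
  calc |gradLrp d p r x l - gradLrp d p r y l|
      = |p * ((x l * |x l| ^ (r-2)) * (A ^ (p-r) - B ^ (p-r)))
          + p * (B ^ (p-r) * ((x l * |x l| ^ (r-2)) - (y l * |y l| ^ (r-2))))| := by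
        rw [hgx, hgy]; congr 1; ring
    _ ≤ |p * ((x l * |x l| ^ (r-2)) * (A ^ (p-r) - B ^ (p-r)))|
          + |p * (B ^ (p-r) * ((x l * |x l| ^ (r-2)) - (y l * |y l| ^ (r-2))))| := abs_add_le _ _
    _ = p * (|x l * |x l| ^ (r-2)| * |A ^ (p-r) - B ^ (p-r)|)
          + p * (B ^ (p-r) * |(x l * |x l| ^ (r-2)) - (y l * |y l| ^ (r-2))|) := by
        rw [abs_mul p ((x l * |x l| ^ (r-2)) * (A ^ (p-r) - B ^ (p-r))),
          abs_mul (x l * |x l| ^ (r-2)) (A ^ (p-r) - B ^ (p-r)),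
          abs_mul p (B ^ (p-r) * ((x l * |x l| ^ (r-2)) - (y l * |y l| ^ (r-2)))),
          abs_mul (B ^ (p-r)) ((x l * |x l| ^ (r-2)) - (y l * |y l| ^ (r-2))),
          abs_of_nonneg hp0.le, abs_of_nonneg hBpr]
    _ ≤ p * (A ^ (r-1) * |A ^ (p-r) - B ^ (p-r)|) + p * (C2 * |x l - y l| ^ α) := by
        have e1 : |x l * |x l| ^ (r-2)| * |A ^ (p-r) - B ^ (p-r)|
            ≤ A ^ (r-1) * |A ^ (p-r) - B ^ (p-r)| :=
          mul_le_mul_of_nonneg_right hψx habs1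
        have := mul_le_mul_of_nonneg_left e1 hp0.le
        have := mul_le_mul_of_nonneg_left hT2x hp0.le
        linarith
    _ ≤ p * (C1 * (M ^ (min 1 (p-1) - α) * ((d:ℝ) ^ α * ‖x - y‖ ^ α))) + p * (C2 * ‖x - y‖ ^ α) := by
        have e2 : A ^ (r-1) * |A ^ (p-r) - B ^ (p-r)| ≤
            C1 * (M ^ (min 1 (p-1) - α) * ((d:ℝ) ^ α * ‖x - y‖ ^ α)) := by
          refine le_trans hT1x ?_
          apply mul_le_mul_of_nonneg_left _ hC1.le
          refine le_trans hlow ?_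
          exact mul_le_mul_of_nonneg_left hBA (Real.rpow_nonneg hM0.le _)
        have e3 : C2 * |x l - y l| ^ α ≤ C2 * ‖x - y‖ ^ α :=
          mul_le_mul_of_nonneg_left hcl hC2.le
        have := mul_le_mul_of_nonneg_left e2 hp0.le
        have := mul_le_mul_of_nonneg_left e3 hp0.le
        linarith
    _ = p * (C1 * M ^ (min 1 (p-1) - α) * (d:ℝ) ^ α + C2) * ‖x - y‖ ^ α := by ring

end main


/-- For `p, r > 1`, the function `h(x) = ‖x‖_{ℓ_r}^p` is differentiable with the stated
gradient, and each partial derivative is `min(1, p-1, r-1)`-Hölder on `B(0,2)` with a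
constant depending only on `d, p, r`; hence `h ∈ C^{min(2,p,r)}(B(0,2))`. -/
theorem stmt_14 (d : ℕ) (p r : ℝ) (hd : 1 ≤ d) (hp : 1 < p) (hr : 1 < r) :
    (∀ x : EuclideanSpace ℝ (Fin d),
      HasGradientAt (fun x : EuclideanSpace ℝ (Fin d) => (∑ i, |x i| ^ r) ^ (p / r))
        (gradLrp d p r x) x) ∧
    ∃ C > 0, ∀ l : Fin d, ∀ x ∈ Metric.closedBall (0 : EuclideanSpace ℝ (Fin d)) 2,
      ∀ y ∈ Metric.closedBall (0 : EuclideanSpace ℝ (Fin d)) 2,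
      |gradLrp d p r x l - gradLrp d p r y l| ≤
        C * ‖x - y‖ ^ (min 1 (min (p - 1) (r - 1))) := by
  constructor
  · exact fun x => grad_part hp hr x
  · obtain ⟨C, hC, hkey⟩ := key_est (d := d) (p := p) (r := r) hd hp hr
    refine ⟨C, hC, ?_⟩
    intro l x hx y hy
    rcases le_total (∑ i, |x i| ^ r) (∑ i, |y i| ^ r) with h | h
    · exact hkey l x hx y hy h
    · have := hkey l y hy x hx h
      rwa [abs_sub_comm, norm_sub_rev] at this
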